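/- The complex 6×6 matrix M₀ with rows (0,0,0,0,4,0), (4,0,0,0,0,4), (0,4,0,0,0,0), (0,4,0,0,0,0), (0,0,4,4,0,0), (0,0,0,0,4,0) has characteristic polynomial X²·(X⁴ − 1024). Consequently its eigenvalues are 4√2, −4√2, 4√2·i, −4√2·i, and 0, where the eigenvalue 0 has algebraic multiplicity 2. -/
import Mathlib

open Polynomial Matrix in
private lemma aux_cons_val_five {α : Type*} {m : ℕ} (x : α) (u : Fin (m + 5) → α) :
    vecCons x u 5 = vecHead (vecTail (vecTail (vecTail (vecTail u)))) :=
  rfl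

/-- The matrix of quantum multiplication by `c₁ = 4σ₁` on `QH(Gr(2,4))` at `q = 1`,
in the basis of Schubert classes: the Dubrovin operator `K⁰` with zero bulk. -/
noncomputable def M0 : Matrix (Fin 6) (Fin 6) ℂ :=
  !![0, 0, 0, 0, 4, 0;
     4, 0, 0, 0, 0, 4;
     0, 4, 0, 0, 0, 0;
     0, 4, 0, 0, 0, 0;
     0, 0, 4, 4, 0, 0;
     0, 0, 0, 0, 4, 0]

open Polynomial in
set_option maxHeartbeats 1000000 in
set_option maxRecDepth 10000 in
private lemma charpoly_M0_eq : M0.charpoly = X ^ 2 * (X ^ 4 - C 1024) := by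
  have h : M0.charmatrix =
    !![X, 0, 0, 0, -4, 0;
       -4, X, 0, 0, 0, -4;
       0, -4, X, 0, 0, 0;
       0, -4, 0, X, 0, 0;
       0, 0, -4, -4, X, 0;
       0, 0, 0, 0, -4, X] := by
    apply Matrix.ext
    intro i j
    fin_cases i <;> fin_cases j <;>
      simp [M0, Matrix.charmatrix_apply, Matrix.one_apply, map_ofNat, aux_cons_val_five,
        Matrix.vecHead, Matrix.vecTail]
  rw [Matrix.charpoly, h]
  simp only [Matrix.det_succ_row_zero, Fin.sum_univ_succ, Finset.univ_unique,
    Finset.sum_singleton, Matrix.det_fin_one, Matrix.det_fin_zero, Matrix.cons_val_fin_one,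
    Fin.default_eq_zero, Matrix.submatrix_apply,
    Fin.zero_succAbove, Fin.succ_succAbove_zero, Fin.succ_succAbove_succ,
    Matrix.cons_val_zero, Matrix.cons_val_succ, Fin.val_zero, Fin.val_succ,
    pow_succ, pow_zero, one_mul, neg_mul, mul_neg, neg_neg, zero_mul, mul_zero,
    neg_zero, zero_add, add_zero, Matrix.of_apply, map_ofNat]
  ring

open Polynomial in
private lemma charpoly_factored :
    (X ^ 2 * (X ^ 4 - C 1024) : ℂ[X]) =
      (Multiset.map (fun x => X - C x)
        ({4 * (Real.sqrt 2 : ℂ), -(4 * (Real.sqrt 2 : ℂ)),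
          4 * (Real.sqrt 2 : ℂ) * Complex.I, -(4 * (Real.sqrt 2 : ℂ) * Complex.I),
          0, 0} : Multiset ℂ)).prod := by
  set a : ℂ := 4 * (Real.sqrt 2 : ℂ) with ha_def
  have ha : a ^ 2 = 32 := by
    rw [ha_def, mul_pow, ← Complex.ofReal_pow, Real.sq_sqrt (by norm_num : (0:ℝ) ≤ 2)]
    norm_num
  simp only [Multiset.insert_eq_cons, Multiset.map_cons, Multiset.map_singleton,
    Multiset.prod_cons, Multiset.prod_singleton, map_neg, map_mul, map_zero, sub_zero]
  have hI : (C Complex.I) ^ 2 = -1 := by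
    rw [← map_pow, Complex.I_sq, map_neg, map_one]
  have hb : (C a) ^ 2 = 32 := by
    rw [← map_pow, ha, map_ofNat]
  have h1024 : (C 1024 : ℂ[X]) = 1024 := by rw [map_ofNat]
  rw [h1024]
  linear_combination (X ^ 2 * (X ^ 2 * (C Complex.I) ^ 2 + X ^ 2
      - (C Complex.I) ^ 2 * ((C a) ^ 2 + 32))) * hb
    + (X ^ 2 * (32 * X ^ 2 - 1024)) * hI

/-- `M0` has characteristic polynomial `X² (X⁴ - 1024)`; consequently its
eigenvalues are `±4√2`, `±4√2 i` and `0`, with `0` of algebraic multiplicity `2`. -/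
theorem charpoly_M0 :
    M0.charpoly = Polynomial.X ^ 2 * (Polynomial.X ^ 4 - Polynomial.C 1024) ∧
    M0.charpoly.roots =
      {4 * (Real.sqrt 2 : ℂ), -(4 * (Real.sqrt 2 : ℂ)),
       4 * (Real.sqrt 2 : ℂ) * Complex.I, -(4 * (Real.sqrt 2 : ℂ) * Complex.I),
       0, 0} := by
  refine ⟨charpoly_M0_eq, ?_⟩
  rw [charpoly_M0_eq, charpoly_factored, Polynomial.roots_multiset_prod_X_sub_C]
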